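/- Let q be a prime power and k, m positive integers. If C and C' are two non-zero MRD codes in Mat(k×m, F_q) with the same minimum rank, then C and C' have the same rank distribution, i.e., A_i(C) = A_i(C') for all i ≥ 0. -/

import Mathlib

open Matrix BigOperators

/-- The Gaussian (q-)binomial coefficient, defined via the q-Pascal recursion. -/
def qBinom (q : ℕ) : ℕ → ℕ → ℕ
  | _, 0 => 1
  | 0, _ + 1 => 0
  | s + 1, t + 1 => qBinom q s t + q ^ (t + 1) * qBinom q s (t + 1)

variable {F : Type} [Field F]

/-- The dual of a rank-metric code with respect to the trace product. -/
def dualCode {k m : ℕ} (C : Submodule F (Matrix (Fin k) (Fin m) F)) :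
    Submodule F (Matrix (Fin k) (Fin m) F) where
  carrier := {N | ∀ M ∈ C, Matrix.trace (M * Nᵀ) = 0}
  add_mem' := by
    intro a b ha hb M hM
    rw [Set.mem_setOf_eq] at *
    rw [Matrix.transpose_add, Matrix.mul_add, Matrix.trace_add, ha M hM, hb M hM, add_zero]
  zero_mem' := by
    intro M hM
    simp
  smul_mem' := by
    intro c N hN M hM
    rw [Set.mem_setOf_eq] at *
    rw [Matrix.transpose_smul, Matrix.mul_smul, Matrix.trace_smul, hN M hM, smul_zero]

/-- Minimum rank of a code. -/
noncomputable def minrk {k m : ℕ} (C : Submodule F (Matrix (Fin k) (Fin m) F)) : ℕ :=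
  sInf {r | ∃ M ∈ C, M ≠ 0 ∧ M.rank = r}

/-- Maximum rank of a code. -/
noncomputable def maxrk {k m : ℕ} (C : Submodule F (Matrix (Fin k) (Fin m) F)) : ℕ :=
  sSup {r | ∃ M ∈ C, M.rank = r}

/-- Rank distribution of a code. -/
noncomputable def rankDist {k m : ℕ} (C : Submodule F (Matrix (Fin k) (Fin m) F)) (i : ℕ) : ℕ :=
  Nat.card {M : Matrix (Fin k) (Fin m) F // M ∈ C ∧ M.rank = i}

/-- MRD codes. -/
def IsMRD {k m : ℕ} (C : Submodule F (Matrix (Fin k) (Fin m) F)) : Prop :=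
  C = ⊥ ∨ Module.finrank F ↥C = max k m * (min k m - minrk C + 1)

/-- Optimal anticodes. -/
def IsOptimalAnticode {k m : ℕ} (C : Submodule F (Matrix (Fin k) (Fin m) F)) : Prop :=
  Module.finrank F ↥C = max k m * maxrk C

/-- The subspace of matrices whose column space is contained in `U`. -/
def matIn {k : ℕ} (m : ℕ) (U : Submodule F (Fin k → F)) :
    Submodule F (Matrix (Fin k) (Fin m) F) where
  carrier := {M | ∀ j, Mᵀ j ∈ U}
  add_mem' := by
    intro a b ha hb j
    rw [Matrix.transpose_add]
    exact U.add_mem (ha j) (hb j)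
  zero_mem' := by
    intro j
    rw [Matrix.transpose_zero]
    exact U.zero_mem
  smul_mem' := by
    intro c M hM j
    rw [Matrix.transpose_smul]
    exact U.smul_mem c (hM j)

/-- The dual of a subspace of `Fin k → K` with respect to the standard inner product. -/
def dualPi {K : Type} [Field K] {k : ℕ} (C : Submodule K (Fin k → K)) :
    Submodule K (Fin k → K) where
  carrier := {β | ∀ α ∈ C, ∑ i, α i * β i = 0}
  add_mem' := by
    intro a b ha hb α hα
    rw [Set.mem_setOf_eq] at *
    have : ∑ i, α i * (a + b) i = (∑ i, α i * a i) + ∑ i, α i * b i := by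
      rw [← Finset.sum_add_distrib]
      exact Finset.sum_congr rfl fun i _ => by simp [mul_add]
    rw [this, ha α hα, hb α hα, add_zero]
  zero_mem' := by
    intro α hα
    simp
  smul_mem' := by
    intro c β hβ α hα
    rw [Set.mem_setOf_eq] at *
    have : ∑ i, α i * (c • β) i = c * ∑ i, α i * β i := by
      rw [Finset.mul_sum]
      exact Finset.sum_congr rfl fun i _ => by simp [smul_eq_mul]; ring
    rw [this, hβ α hα, mul_zero]

/-- The matrix associated to a vector `α ∈ K^k` with respect to a basis `G` of `K` over `F`. -/
noncomputable def matOfBasis (F K : Type) [Field F] [Field K] [Algebra F K]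
    (k m : ℕ) (G : Module.Basis (Fin m) F K) :
    (Fin k → K) →ₗ[F] Matrix (Fin k) (Fin m) F where
  toFun α := Matrix.of fun i j => G.repr (α i) j
  map_add' α β := by
    ext i j
    simp
  map_smul' c α := by
    ext i j
    simp

/-- The `h`-trace of a `k × m` matrix (`k ≤ m`). -/
def hTrace {k m : ℕ} (hkm : k ≤ m) (h : ℕ) (M : Matrix (Fin k) (Fin m) F) : F :=
  ∑ i : Fin k, if (i : ℕ) < h then M i (Fin.castLE hkm i) else 0


section AuxRankMetric
open Module Submodule

lemma mem_matIn_iff {k m : ℕ} (U : Submodule F (Fin k → F)) (M : Matrix (Fin k) (Fin m) F) :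
    M ∈ matIn m U ↔ LinearMap.range M.mulVecLin ≤ U := by
  have h0 : M ∈ matIn m U ↔ ∀ j, Mᵀ j ∈ U := Iff.rfl
  rw [h0, Matrix.range_mulVecLin, span_le]
  constructor
  · rintro h x ⟨j, rfl⟩; exact h j
  · intro h j; exact h ⟨j, rfl⟩

lemma mrank_def {k m : ℕ} (M : Matrix (Fin k) (Fin m) F) :
    M.rank = finrank F (LinearMap.range M.mulVecLin) := rfl

lemma rank_pos_of_ne_zero {k m : ℕ} {M : Matrix (Fin k) (Fin m) F} (h : M ≠ 0) : 0 < M.rank := by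
  rcases Nat.eq_zero_or_pos M.rank with h0 | hp
  · exfalso
    apply h
    rw [mrank_def] at h0
    have h1 : LinearMap.range M.mulVecLin = ⊥ := Submodule.finrank_eq_zero.mp h0
    have h2 : M.mulVecLin = 0 := LinearMap.range_eq_bot.mp h1
    ext i j
    have h3 := LinearMap.congr_fun h2 (Pi.single j 1)
    have h4 := congrFun h3 i
    simpa [Matrix.mulVecLin_apply, Matrix.mulVec_single] using h4
  · exact hp

lemma minrk_le_rank {k m : ℕ} {C : Submodule F (Matrix (Fin k) (Fin m) F)}
    {M : Matrix (Fin k) (Fin m) F} (hM : M ∈ C) (h0 : M ≠ 0) : minrk C ≤ M.rank :=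
  Nat.sInf_le ⟨M, hM, h0, rfl⟩

lemma exists_rank_minrk {k m : ℕ} {C : Submodule F (Matrix (Fin k) (Fin m) F)} (h : C ≠ ⊥) :
    ∃ M ∈ C, M ≠ 0 ∧ M.rank = minrk C := by
  have hne : {r | ∃ M ∈ C, M ≠ 0 ∧ M.rank = r}.Nonempty := by
    obtain ⟨M, hM, h0⟩ := Submodule.exists_mem_ne_zero_of_ne_bot h
    exact ⟨M.rank, M, hM, h0, rfl⟩
  exact Nat.sInf_mem hne

lemma one_le_minrk {k m : ℕ} {C : Submodule F (Matrix (Fin k) (Fin m) F)} (h : C ≠ ⊥) :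
    1 ≤ minrk C := by
  obtain ⟨M, _, h0, hr⟩ := exists_rank_minrk h
  rw [← hr]; exact rank_pos_of_ne_zero h0

lemma minrk_le_height {k m : ℕ} {C : Submodule F (Matrix (Fin k) (Fin m) F)} (h : C ≠ ⊥) :
    minrk C ≤ k := by
  obtain ⟨M, _, _, hr⟩ := exists_rank_minrk h
  rw [← hr]; exact M.rank_le_height

def rowSel {k : ℕ} (m a : ℕ) (f : Fin a → Fin k) :
    Matrix (Fin k) (Fin m) F →ₗ[F] Matrix (Fin a) (Fin m) F where
  toFun M := M.submatrix f id
  map_add' M N := by ext i j; simp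
  map_smul' c M := by ext i j; simp

lemma rank_le_of_rows_zero {k m a : ℕ} {M : Matrix (Fin k) (Fin m) F}
    (h : ∀ i : Fin k, a ≤ (i : ℕ) → M i = 0) : M.rank ≤ a := by
  rcases le_or_gt k a with hka | hak
  · exact M.rank_le_height.trans hka
  · have ha : a ≤ k := hak.le
    rw [← Matrix.rank_transpose M, Matrix.rank_eq_finrank_span_cols]
    unfold Matrix.col
    rw [Matrix.transpose_transpose]
    have hsub : Submodule.span F (Set.range M) ≤
        Submodule.span F (Set.range fun t : Fin a => M (Fin.castLE ha t)) := by
      rw [Submodule.span_le]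
      rintro x ⟨i, rfl⟩
      by_cases hi : (i : ℕ) < a
      · apply Submodule.subset_span
        exact ⟨⟨i, hi⟩, by congr 1⟩
      · rw [h i (le_of_not_gt hi)]
        exact Submodule.zero_mem _
    calc finrank F (Submodule.span F (Set.range M))
        ≤ finrank F (Submodule.span F (Set.range fun t : Fin a => M (Fin.castLE ha t))) :=
          Submodule.finrank_mono hsub
      _ ≤ a := by simpa [Set.finrank] using finrank_range_le_card (fun t : Fin a => M (Fin.castLE ha t))

def coordSub (F : Type) [Field F] (k u : ℕ) : Submodule F (Fin k → F) where
  carrier := {x | ∀ i : Fin k, u ≤ (i : ℕ) → x i = 0}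
  add_mem' := by intro a b ha hb i hi; simp only [Pi.add_apply]; rw [ha i hi, hb i hi, add_zero]
  zero_mem' := by intro i _; rfl
  smul_mem' := by intro c x hx i hi; simp only [Pi.smul_apply]; rw [hx i hi, smul_zero]

lemma mem_coordSub_iff {k u : ℕ} (x : Fin k → F) :
    x ∈ coordSub F k u ↔ ∀ i : Fin k, u ≤ (i : ℕ) → x i = 0 := Iff.rfl

noncomputable def coordSubEquiv (k u : ℕ) (h : u ≤ k) :
    ↥(coordSub F k u) ≃ₗ[F] (Fin u → F) where
  toFun x := fun t => x.1 (Fin.castLE h t)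
  map_add' x y := rfl
  map_smul' c x := rfl
  invFun y := ⟨fun i => if hi : (i : ℕ) < u then y ⟨i, hi⟩ else 0, by
    intro i hi
    simp [Nat.not_lt.mpr hi]⟩
  left_inv x := by
    ext i
    by_cases hi : (i : ℕ) < u
    · simp only [dif_pos hi]
      congr 1
    · simp only [dif_neg hi]
      exact (x.2 i (Nat.not_lt.mp hi)).symm
  right_inv y := by
    ext t
    show (if hi : ((Fin.castLE h t : Fin k) : ℕ) < u then y ⟨_, hi⟩ else 0) = y t
    rw [dif_pos (show ((Fin.castLE h t : Fin k) : ℕ) < u from t.isLt)]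
    exact congrArg y (Fin.ext rfl)

lemma finrank_coordSub {k u : ℕ} (h : u ≤ k) : finrank F ↥(coordSub F k u) = u := by
  rw [(coordSubEquiv k u h).finrank_eq, Module.finrank_fin_fun]

lemma map_map_symm {V V' : Type} [AddCommGroup V] [Module F V] [AddCommGroup V'] [Module F V']
    (e : V ≃ₗ[F] V') (p : Submodule F V) : (p.map e.toLinearMap).map e.symm.toLinearMap = p := by
  ext x
  constructor
  · rintro ⟨y, ⟨z, hz, rfl⟩, rfl⟩
    simpa using hz
  · intro hx
    exact ⟨e x, ⟨x, hx, rfl⟩, by simp⟩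

lemma mem_map_equiv' {V V' : Type} [AddCommGroup V] [Module F V] [AddCommGroup V']
    [Module F V'] (e : V ≃ₗ[F] V') (p : Submodule F V) (x : V') :
    x ∈ p.map e.toLinearMap ↔ e.symm x ∈ p := by
  constructor
  · rintro ⟨y, hy, rfl⟩
    simpa using hy
  · intro h
    exact ⟨e.symm x, h, by simp⟩

lemma finrank_map_equiv {V V' : Type} [AddCommGroup V] [Module F V] [AddCommGroup V']
    [Module F V'] (e : V ≃ₗ[F] V') (p : Submodule F V) :
    finrank F ↥(p.map e.toLinearMap) = finrank F ↥p := by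
  rw [LinearEquiv.finrank_map_eq]

lemma exists_map_eq {V : Type} [AddCommGroup V] [Module F V] [FiniteDimensional F V]
    {W W' : Submodule F V} (h : finrank F W = finrank F W') :
    ∃ g : V ≃ₗ[F] V, W.map g.toLinearMap = W' := by
  obtain ⟨Wc, hWc⟩ := Submodule.exists_isCompl W
  obtain ⟨W'c, hW'c⟩ := Submodule.exists_isCompl W'
  have h1 := Submodule.finrank_add_eq_of_isCompl hWc
  have h2 := Submodule.finrank_add_eq_of_isCompl hW'c
  have hfc : finrank F Wc = finrank F W'c := by omega
  let eW : ↥W ≃ₗ[F] ↥W' := LinearEquiv.ofFinrankEq _ _ h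
  let eWc : ↥Wc ≃ₗ[F] ↥W'c := LinearEquiv.ofFinrankEq _ _ hfc
  let e1 := Submodule.prodEquivOfIsCompl W Wc hWc
  let e2 := Submodule.prodEquivOfIsCompl W' W'c hW'c
  refine ⟨e1.symm.trans ((eW.prodCongr eWc).trans e2), ?_⟩
  apply Submodule.eq_of_le_of_finrank_le
  · rintro x ⟨w, hw, rfl⟩
    have hee : e1 (⟨w, hw⟩, 0) = w := by
      simp [e1, Submodule.coe_prodEquivOfIsCompl']
    have h2' : e1.symm w = (⟨w, hw⟩, 0) := by
      rw [LinearEquiv.symm_apply_eq]; exact hee.symm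
    simp only [LinearEquiv.coe_coe, LinearEquiv.trans_apply, h2']
    have h3 : (eW.prodCongr eWc) (⟨w, hw⟩, 0) = (eW ⟨w, hw⟩, 0) := by
      simp [LinearEquiv.prodCongr_apply]
    rw [h3]
    have : e2 (eW ⟨w, hw⟩, 0) = ↑(eW ⟨w, hw⟩) + (0 : V) := by
      simp [e2, Submodule.coe_prodEquivOfIsCompl']
    rw [this, add_zero]
    exact (eW ⟨w, hw⟩).2
  · rw [finrank_map_equiv]
    exact h.ge

lemma mem_matIn_coordSub {k m u : ℕ} (M : Matrix (Fin k) (Fin m) F) :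
    M ∈ matIn m (coordSub F k u) ↔ ∀ i : Fin k, u ≤ (i : ℕ) → M i = 0 := by
  constructor
  · intro h i hi
    funext j
    exact h j i hi
  · intro h j i hi
    exact congrFun (h i hi) j

def colTrans {k : ℕ} (m : ℕ) (g : (Fin k → F) ≃ₗ[F] (Fin k → F)) :
    Matrix (Fin k) (Fin m) F ≃ₗ[F] Matrix (Fin k) (Fin m) F where
  toFun M := Matrix.of fun i j => g (fun i' => M i' j) i
  invFun M := Matrix.of fun i j => g.symm (fun i' => M i' j) i
  map_add' M N := by
    ext i j
    show g ((fun i' => M i' j) + fun i' => N i' j) i = _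
    rw [map_add]
    rfl
  map_smul' c M := by
    ext i j
    show g (c • fun i' => M i' j) i = _
    rw [_root_.map_smul]
    rfl
  left_inv M := by
    ext i j
    show g.symm (g fun i' => M i' j) i = M i j
    rw [LinearEquiv.symm_apply_apply]
  right_inv M := by
    ext i j
    show g (g.symm fun i' => M i' j) i = M i j
    rw [LinearEquiv.apply_symm_apply]

lemma range_mulVecLin_colTrans {k m : ℕ} (g : (Fin k → F) ≃ₗ[F] (Fin k → F))
    (M : Matrix (Fin k) (Fin m) F) :
    LinearMap.range (colTrans m g M).mulVecLin = (LinearMap.range M.mulVecLin).map g.toLinearMap := by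
  rw [Matrix.range_mulVecLin, Matrix.range_mulVecLin]
  have h1 : (colTrans m g M)ᵀ = fun j => g (Mᵀ j) := rfl
  have h2 : Set.range ((colTrans m g M)ᵀ) = g '' Set.range Mᵀ := by
    rw [h1]
    exact (Set.range_comp g Mᵀ)
  unfold Matrix.col
  rw [h2]
  rw [Submodule.map_span]
  rfl

lemma rank_colTrans {k m : ℕ} (g : (Fin k → F) ≃ₗ[F] (Fin k → F))
    (M : Matrix (Fin k) (Fin m) F) : (colTrans m g M).rank = M.rank := by
  rw [mrank_def, mrank_def, range_mulVecLin_colTrans, finrank_map_equiv]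

lemma colTrans_mem_matIn {k m : ℕ} (g : (Fin k → F) ≃ₗ[F] (Fin k → F))
    (M : Matrix (Fin k) (Fin m) F) (W : Submodule F (Fin k → F)) :
    colTrans m g M ∈ matIn m (W.map g.toLinearMap) ↔ M ∈ matIn m W := by
  rw [mem_matIn_iff, mem_matIn_iff, range_mulVecLin_colTrans]
  constructor
  · intro h x hx
    have := h (Submodule.mem_map_of_mem (f := g.toLinearMap) hx)
    obtain ⟨y, hy, hxy⟩ := this
    have : y = x := by
      have := congrArg g.symm hxy
      simpa using this
    exact this ▸ hy
  · rintro h x ⟨y, hy, rfl⟩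
    exact Submodule.mem_map_of_mem (h hy)

lemma map_colTrans_matIn {k m : ℕ} (g : (Fin k → F) ≃ₗ[F] (Fin k → F))
    (W : Submodule F (Fin k → F)) :
    (matIn m W).map (colTrans m g).toLinearMap = matIn m (W.map g.toLinearMap) := by
  ext N
  rw [mem_map_equiv', ← colTrans_mem_matIn g ((colTrans m g).symm N) W,
    LinearEquiv.apply_symm_apply]

lemma finrank_matrix' (a m : ℕ) : finrank F (Matrix (Fin a) (Fin m) F) = a * m := by
  rw [Module.finrank_matrix]
  simp

lemma minrk_map {k m k' m' : ℕ} (Φ : Matrix (Fin k) (Fin m) F ≃ₗ[F] Matrix (Fin k') (Fin m') F)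
    (hrk : ∀ M, (Φ M).rank = M.rank) (C : Submodule F (Matrix (Fin k) (Fin m) F)) :
    minrk (C.map Φ.toLinearMap) = minrk C := by
  unfold minrk
  congr 1
  ext r
  simp only [Set.mem_setOf_eq]
  constructor
  · rintro ⟨N, hN, h0, rfl⟩
    rw [mem_map_equiv'] at hN
    refine ⟨Φ.symm N, hN, fun hz => h0 ?_, ?_⟩
    · rw [← Φ.apply_symm_apply N, hz, map_zero]
    · rw [← hrk (Φ.symm N), Φ.apply_symm_apply]
  · rintro ⟨M, hM, h0, rfl⟩
    exact ⟨Φ M, Submodule.mem_map_of_mem hM,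
      fun hz => h0 (by simpa using congrArg Φ.symm hz), hrk M⟩

lemma rankDist_map {k m k' m' : ℕ} (Φ : Matrix (Fin k) (Fin m) F ≃ₗ[F] Matrix (Fin k') (Fin m') F)
    (hrk : ∀ M, (Φ M).rank = M.rank) (C : Submodule F (Matrix (Fin k) (Fin m) F)) (i : ℕ) :
    rankDist (C.map Φ.toLinearMap) i = rankDist C i := by
  unfold rankDist
  apply Nat.card_congr
  refine ⟨fun N => ⟨Φ.symm N.1, (mem_map_equiv' _ _ _).mp N.2.1, ?_⟩,
    fun M => ⟨Φ M.1, Submodule.mem_map_of_mem M.2.1, ?_⟩, ?_, ?_⟩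
  · rw [← hrk (Φ.symm N.1), Φ.apply_symm_apply]
    exact N.2.2
  · rw [hrk]
    exact M.2.2
  · intro N
    apply Subtype.ext
    simp
  · intro M
    apply Subtype.ext
    simp

lemma map_eq_bot_iff' {k m k' m' : ℕ} (Φ : Matrix (Fin k) (Fin m) F ≃ₗ[F] Matrix (Fin k') (Fin m') F)
    (C : Submodule F (Matrix (Fin k) (Fin m) F)) : C.map Φ.toLinearMap = ⊥ ↔ C = ⊥ := by
  constructor
  · intro h
    rw [eq_bot_iff] at h ⊢
    intro x hx
    have h1 : Φ x ∈ C.map Φ.toLinearMap := Submodule.mem_map_of_mem hx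
    have h2 := h h1
    rw [Submodule.mem_bot] at h2 ⊢
    simpa using congrArg Φ.symm h2
  · rintro rfl
    exact Submodule.map_bot _

lemma finrank_of_isMRD {k m : ℕ} (hkm : k ≤ m) {C : Submodule F (Matrix (Fin k) (Fin m) F)}
    (hC : IsMRD C) (hC0 : C ≠ ⊥) : finrank F ↥C = m * (k - minrk C + 1) := by
  rcases hC with h | h
  · exact absurd h hC0
  · rw [h, max_eq_right hkm, min_eq_left hkm]

lemma finrank_inf_matIn_coord {k m u : ℕ} (hkm : k ≤ m)
    {C : Submodule F (Matrix (Fin k) (Fin m) F)} (hC : IsMRD C) (hC0 : C ≠ ⊥) (hu : u ≤ k) :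
    finrank F ↥(C ⊓ matIn m (coordSub F k u)) = m * (u + 1 - minrk C) := by
  set d := minrk C with hd
  have hd1 : 1 ≤ d := one_le_minrk hC0
  have hdk : d ≤ k := minrk_le_height hC0
  have hdim : finrank F ↥C = m * (k - d + 1) := finrank_of_isMRD hkm hC hC0
  rcases lt_or_ge u d with hud | hdu
  · have hbot : C ⊓ matIn m (coordSub F k u) = ⊥ := by
      rw [eq_bot_iff]
      intro M hM
      rw [Submodule.mem_inf] at hM
      rw [Submodule.mem_bot]
      by_contra h0
      have h1 : d ≤ M.rank := minrk_le_rank hM.1 h0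
      have h2 : M.rank ≤ u := by
        have h3 := (mem_matIn_iff _ _).mp hM.2
        calc M.rank = finrank F ↥(LinearMap.range M.mulVecLin) := mrank_def M
          _ ≤ finrank F ↥(coordSub F k u) := Submodule.finrank_mono h3
          _ = u := finrank_coordSub hu
      omega
    rw [hbot, finrank_bot]
    have h4 : u + 1 - d = 0 := by omega
    rw [h4, Nat.mul_zero]
  · set D := C ⊓ matIn m (coordSub F k u) with hD
    have hub : finrank F ↥D ≤ m * (u + 1 - d) := by
      set a := u + 1 - d with ha
      let f : Fin a → Fin k := fun t => ⟨d - 1 + (t : ℕ), by omega⟩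
      let φ := (rowSel m a f).comp D.subtype
      have hinj : Function.Injective φ := by
        rw [← LinearMap.ker_eq_bot, LinearMap.ker_eq_bot']
        intro M hM0
        have hMC : (M : Matrix (Fin k) (Fin m) F) ∈ C := M.2.1
        have hMci : (M : Matrix (Fin k) (Fin m) F) ∈ matIn m (coordSub F k u) := M.2.2
        have hrows : ∀ i : Fin k, d - 1 ≤ (i : ℕ) → (M : Matrix (Fin k) (Fin m) F) i = 0 := by
          intro i hi
          rcases lt_or_ge (i : ℕ) u with hiu | hiu
          · have ht : (i : ℕ) - (d - 1) < a := by omega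
            funext j
            have hev : (M : Matrix (Fin k) (Fin m) F) (f ⟨(i : ℕ) - (d - 1), ht⟩) j = 0 :=
              congrFun (congrFun hM0 ⟨(i : ℕ) - (d - 1), ht⟩) j
            have hf : f ⟨(i : ℕ) - (d - 1), ht⟩ = i := by
              apply Fin.ext
              show d - 1 + ((i : ℕ) - (d - 1)) = (i : ℕ)
              omega
            rw [hf] at hev
            exact hev
          · exact (mem_matIn_coordSub _).mp hMci i hiu
        have hr : (M : Matrix (Fin k) (Fin m) F).rank ≤ d - 1 := rank_le_of_rows_zero hrows
        have hz : (M : Matrix (Fin k) (Fin m) F) = 0 := by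
          by_contra h0
          have := minrk_le_rank hMC h0
          omega
        exact Subtype.ext hz
      have hle := LinearMap.finrank_le_finrank_of_injective hinj
      rw [finrank_matrix'] at hle
      calc finrank F ↥D ≤ a * m := hle
        _ = m * (u + 1 - d) := by rw [ha, mul_comm]
    have hlb : m * (k - d + 1) ≤ finrank F ↥D + m * (k - u) := by
      let f2 : Fin (k - u) → Fin k := fun t => ⟨u + (t : ℕ), by omega⟩
      let g2 := (rowSel m (k - u) f2).comp C.subtype
      have hker : LinearMap.ker g2 = Submodule.comap C.subtype D := by
        ext M
        simp only [LinearMap.mem_ker, Submodule.mem_comap, hD, Submodule.mem_inf]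
        constructor
        · intro h0
          refine ⟨M.2, ?_⟩
          rw [mem_matIn_coordSub]
          intro i hi
          funext j
          have ht : (i : ℕ) - u < k - u := by omega
          have hev : (M : Matrix (Fin k) (Fin m) F) (f2 ⟨(i : ℕ) - u, ht⟩) j = 0 :=
            congrFun (congrFun h0 ⟨(i : ℕ) - u, ht⟩) j
          have hf : f2 ⟨(i : ℕ) - u, ht⟩ = i := by
            apply Fin.ext
            show u + ((i : ℕ) - u) = (i : ℕ)
            omega
          rw [hf] at hev
          exact hev
        · rintro ⟨-, h2⟩
          ext t j
          show (M : Matrix (Fin k) (Fin m) F) (f2 t) j = 0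
          have hge : u ≤ ((f2 t : Fin k) : ℕ) := by
            show u ≤ u + (t : ℕ)
            omega
          exact congrFun ((mem_matIn_coordSub _).mp h2 (f2 t) hge) j
      have hrank := LinearMap.finrank_range_add_finrank_ker g2
      have h1 : finrank F ↥(LinearMap.ker g2) = finrank F ↥D := by
        rw [hker]
        exact (Submodule.comapSubtypeEquivOfLe (inf_le_left)).finrank_eq
      have h2 : finrank F ↥(LinearMap.range g2) ≤ m * (k - u) := by
        calc finrank F ↥(LinearMap.range g2)
            ≤ finrank F (Matrix (Fin (k - u)) (Fin m) F) := Submodule.finrank_le _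
          _ = (k - u) * m := finrank_matrix' _ _
          _ = m * (k - u) := mul_comm _ _
      omega
    have hsplit : m * (k - d + 1) = m * (u + 1 - d) + m * (k - u) := by
      rw [← Nat.mul_add]
      congr 1
      omega
    omega

lemma finrank_inf_matIn {k m : ℕ} (hkm : k ≤ m) {C : Submodule F (Matrix (Fin k) (Fin m) F)}
    (hC : IsMRD C) (hC0 : C ≠ ⊥) (U : Submodule F (Fin k → F)) :
    finrank F ↥(C ⊓ matIn m U) = m * (finrank F ↥U + 1 - minrk C) := by
  obtain ⟨u, hu⟩ : ∃ u, finrank F ↥U = u := ⟨_, rfl⟩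
  have huk : u ≤ k := by
    have h := Submodule.finrank_le U
    rwa [Module.finrank_fin_fun, hu] at h
  have hcu : finrank F ↥(coordSub F k u) = finrank F ↥U := (finrank_coordSub huk).trans hu.symm
  obtain ⟨g, hg⟩ := exists_map_eq hcu
  have hrkΦs : ∀ M : Matrix (Fin k) (Fin m) F, ((colTrans m g).symm M).rank = M.rank := by
    intro M
    conv_rhs => rw [← (colTrans m g).apply_symm_apply M]
    exact (rank_colTrans g ((colTrans m g).symm M)).symm
  have hmapC : (C.map (colTrans m g).symm.toLinearMap).map (colTrans m g).toLinearMap = C := by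
    have h := map_map_symm (colTrans m g).symm C
    rwa [LinearEquiv.symm_symm] at h
  have hmr : minrk (C.map (colTrans m g).symm.toLinearMap) = minrk C := minrk_map (colTrans m g).symm hrkΦs C
  have hC₂MRD : IsMRD (C.map (colTrans m g).symm.toLinearMap) := by
    right
    have hfr : finrank F ↥(C.map (colTrans m g).symm.toLinearMap) = finrank F ↥C :=
      finrank_map_equiv (colTrans m g).symm C
    rcases hC with h | h
    · exact absurd h hC0
    · rw [hfr, hmr]
      exact h
  have hC₂0 : C.map (colTrans m g).symm.toLinearMap ≠ ⊥ := by
    intro h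
    exact hC0 ((map_eq_bot_iff' (colTrans m g).symm C).mp h)
  have hinter : C ⊓ matIn m U =
      ((C.map (colTrans m g).symm.toLinearMap) ⊓ matIn m (coordSub F k u)).map (colTrans m g).toLinearMap := by
    rw [Submodule.map_inf _ (colTrans m g).injective, hmapC, map_colTrans_matIn, hg]
  rw [hinter, finrank_map_equiv, finrank_inf_matIn_coord hkm hC₂MRD hC₂0 huk, hmr, hu]

lemma card_inf_matIn {k m : ℕ} [Fintype F] (hkm : k ≤ m)
    {C : Submodule F (Matrix (Fin k) (Fin m) F)} (hC : IsMRD C) (hC0 : C ≠ ⊥)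
    (U : Submodule F (Fin k → F)) :
    Nat.card ↥(C ⊓ matIn m U) =
      Fintype.card F ^ (m * (finrank F ↥U + 1 - minrk C)) := by
  classical
  rw [← finrank_inf_matIn hkm hC hC0 U]
  haveI : Fintype ↥(C ⊓ matIn m U) := Fintype.ofFinite _
  rw [Nat.card_eq_fintype_card]
  exact card_eq_pow_finrank

lemma card_contain_eq {k m i : ℕ} (M M' : Matrix (Fin k) (Fin m) F) (h : M.rank = M'.rank) :
    Nat.card {U : Submodule F (Fin k → F) // finrank F ↥U = i ∧ M ∈ matIn m U} =
    Nat.card {U : Submodule F (Fin k → F) // finrank F ↥U = i ∧ M' ∈ matIn m U} := by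
  have hfr : finrank F ↥(LinearMap.range M.mulVecLin)
      = finrank F ↥(LinearMap.range M'.mulVecLin) := by
    rw [← mrank_def, ← mrank_def, h]
  obtain ⟨g, hg⟩ := exists_map_eq hfr
  apply Nat.card_congr
  have key : ∀ U : Submodule F (Fin k → F), M' ∈ matIn m (U.map g.toLinearMap) ↔ M ∈ matIn m U := by
    intro U
    rw [mem_matIn_iff, mem_matIn_iff, ← hg]
    constructor
    · intro hle x hx
      have h1 := hle (Submodule.mem_map_of_mem (f := g.toLinearMap) hx)
      obtain ⟨y, hy, hxy⟩ := h1
      have hyx : y = x := by simpa using congrArg g.symm hxy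
      exact hyx ▸ hy
    · rintro hle x ⟨y, hy, rfl⟩
      exact Submodule.mem_map_of_mem (hle hy)
  refine ⟨fun U => ⟨U.1.map g.toLinearMap, ?_, ?_⟩, fun U => ⟨U.1.map g.symm.toLinearMap, ?_, ?_⟩, ?_, ?_⟩
  · rw [finrank_map_equiv]
    exact U.2.1
  · exact (key U.1).mpr U.2.2
  · rw [finrank_map_equiv]
    exact U.2.1
  · have h2 : (U.1.map g.symm.toLinearMap).map g.toLinearMap = U.1 := by
      have h3 := map_map_symm g.symm U.1
      rwa [LinearEquiv.symm_symm] at h3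
    exact (key (U.1.map g.symm.toLinearMap)).mp (by rw [h2]; exact U.2.2)
  · intro U
    apply Subtype.ext
    exact map_map_symm g U.1
  · intro U
    apply Subtype.ext
    have h3 := map_map_symm g.symm U.1
    rwa [LinearEquiv.symm_symm] at h3

lemma card_contain_of_rank_eq {k m i : ℕ} (M : Matrix (Fin k) (Fin m) F) (h : M.rank = i) :
    Nat.card {U : Submodule F (Fin k → F) // finrank F ↥U = i ∧ M ∈ matIn m U} = 1 := by
  rw [Nat.card_eq_one_iff_unique]
  constructor
  · constructor
    rintro ⟨U, hU, hMU⟩ ⟨U', hU', hMU'⟩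
    have e1 : LinearMap.range M.mulVecLin = U := by
      apply Submodule.eq_of_le_of_finrank_le ((mem_matIn_iff _ _).mp hMU)
      rw [hU, ← h, mrank_def]
    have e2 : LinearMap.range M.mulVecLin = U' := by
      apply Submodule.eq_of_le_of_finrank_le ((mem_matIn_iff _ _).mp hMU')
      rw [hU', ← h, mrank_def]
    apply Subtype.ext
    show U = U'
    rw [← e1, ← e2]
  · refine ⟨⟨LinearMap.range M.mulVecLin, ?_, (mem_matIn_iff _ _).mpr le_rfl⟩⟩
    rw [← mrank_def, h]

lemma card_contain_of_lt {k m i : ℕ} (M : Matrix (Fin k) (Fin m) F) (h : i < M.rank) :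
    Nat.card {U : Submodule F (Fin k → F) // finrank F ↥U = i ∧ M ∈ matIn m U} = 0 := by
  have he : IsEmpty {U : Submodule F (Fin k → F) // finrank F ↥U = i ∧ M ∈ matIn m U} := by
    constructor
    rintro ⟨U, hU, hMU⟩
    have h1 : M.rank ≤ i := by
      rw [mrank_def, ← hU]
      exact Submodule.finrank_mono ((mem_matIn_iff _ _).mp hMU)
    omega
  exact Nat.card_of_isEmpty

lemma filter_card_eq_nat_card {α : Type} [Fintype α] (p : α → Prop) [DecidablePred p] :
    (Finset.univ.filter p).card = Nat.card {x // p x} := by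
  rw [Nat.card_eq_fintype_card, Fintype.card_subtype]

lemma main_le {k m : ℕ} [Fintype F] (hkm : k ≤ m)
    (C C' : Submodule F (Matrix (Fin k) (Fin m) F))
    (hC : IsMRD C) (hC' : IsMRD C') (hC0 : C ≠ ⊥) (hC'0 : C' ≠ ⊥)
    (hmin : minrk C = minrk C') (i : ℕ) : rankDist C i = rankDist C' i := by
  classical
  haveI hfinS : Finite (Submodule F (Fin k → F)) :=
    Finite.of_injective (fun U => (U : Set (Fin k → F))) SetLike.coe_injective
  haveI : Fintype (Submodule F (Fin k → F)) := Fintype.ofFinite _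
  induction i using Nat.strong_induction_on with
  | _ i IH =>
  rcases le_or_gt i k with hik | hik
  swap
  · have hz : ∀ D : Submodule F (Matrix (Fin k) (Fin m) F), rankDist D i = 0 := by
      intro D
      have he : IsEmpty {M : Matrix (Fin k) (Fin m) F // M ∈ D ∧ M.rank = i} := by
        constructor
        rintro ⟨M, -, hr⟩
        have := M.rank_le_height
        omega
      exact Nat.card_of_isEmpty
    rw [hz, hz]
  · have key : ∀ D : Submodule F (Matrix (Fin k) (Fin m) F), IsMRD D → D ≠ ⊥ →
        minrk D = minrk C →
        (Finset.univ.filter fun U : Submodule F (Fin k → F) => finrank F ↥U = i).card *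
          Fintype.card F ^ (m * (i + 1 - minrk C)) =
        ∑ j ∈ Finset.range (k + 1),
          ∑ M ∈ Finset.univ.filter fun M : Matrix (Fin k) (Fin m) F => M ∈ D ∧ M.rank = j,
            Nat.card {U : Submodule F (Fin k → F) // finrank F ↥U = i ∧ M ∈ matIn m U} := by
      intro D hD hD0 hDd
      have step1 : ∀ U : Submodule F (Fin k → F), finrank F ↥U = i →
          (Finset.univ.filter fun M : Matrix (Fin k) (Fin m) F =>
            M ∈ D ∧ M ∈ matIn m U).card
            = Fintype.card F ^ (m * (i + 1 - minrk C)) := by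
        intro U hU
        rw [filter_card_eq_nat_card]
        have e : {M : Matrix (Fin k) (Fin m) F // M ∈ D ∧ M ∈ matIn m U}
            ≃ {M : Matrix (Fin k) (Fin m) F // M ∈ D ⊓ matIn m U} :=
          Equiv.subtypeEquivRight (fun M => (Submodule.mem_inf).symm)
        rw [Nat.card_congr e, card_inf_matIn hkm hD hD0 U, hU, hDd]
      calc (Finset.univ.filter fun U : Submodule F (Fin k → F) => finrank F ↥U = i).card *
            Fintype.card F ^ (m * (i + 1 - minrk C))
          = ∑ U ∈ Finset.univ.filter fun U : Submodule F (Fin k → F) => finrank F ↥U = i,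
              (Finset.univ.filter fun M : Matrix (Fin k) (Fin m) F =>
                M ∈ D ∧ M ∈ matIn m U).card := by
            rw [Finset.sum_congr rfl fun U hU => step1 U (Finset.mem_filter.mp hU).2]
            rw [Finset.sum_const, smul_eq_mul]
        _ = ∑ U ∈ Finset.univ.filter fun U : Submodule F (Fin k → F) => finrank F ↥U = i,
              ∑ M : Matrix (Fin k) (Fin m) F,
                if M ∈ D ∧ M ∈ matIn m U then 1 else 0 := by
            refine Finset.sum_congr rfl fun U _ => ?_
            rw [Finset.card_filter]
        _ = ∑ M : Matrix (Fin k) (Fin m) F,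
              ∑ U ∈ Finset.univ.filter fun U : Submodule F (Fin k → F) => finrank F ↥U = i,
                if M ∈ D ∧ M ∈ matIn m U then 1 else 0 := Finset.sum_comm
        _ = ∑ M : Matrix (Fin k) (Fin m) F,
              if M ∈ D then
                (Finset.univ.filter fun U : Submodule F (Fin k → F) =>
                  finrank F ↥U = i ∧ M ∈ matIn m U).card else 0 := by
            refine Finset.sum_congr rfl fun M _ => ?_
            by_cases hMD : M ∈ D
            · simp only [hMD, true_and, if_true, Finset.card_filter, Finset.sum_filter]
              refine Finset.sum_congr rfl fun U _ => ?_
              by_cases h : finrank F ↥U = i <;> simp [h]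
            · simp [hMD]
        _ = ∑ M ∈ Finset.univ.filter fun M : Matrix (Fin k) (Fin m) F => M ∈ D,
              (Finset.univ.filter fun U : Submodule F (Fin k → F) =>
                finrank F ↥U = i ∧ M ∈ matIn m U).card := (Finset.sum_filter _ _).symm
        _ = ∑ M ∈ Finset.univ.filter fun M : Matrix (Fin k) (Fin m) F => M ∈ D,
              Nat.card {U : Submodule F (Fin k → F) // finrank F ↥U = i ∧ M ∈ matIn m U} := by
            refine Finset.sum_congr rfl fun M _ => ?_
            rw [filter_card_eq_nat_card]
        _ = ∑ j ∈ Finset.range (k + 1),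
              ∑ M ∈ (Finset.univ.filter fun M : Matrix (Fin k) (Fin m) F => M ∈ D).filter
                  (fun M => M.rank = j),
                Nat.card {U : Submodule F (Fin k → F) // finrank F ↥U = i ∧ M ∈ matIn m U} := by
            refine (Finset.sum_fiberwise_of_maps_to ?_ _).symm
            intro M _
            rw [Finset.mem_range]
            have := M.rank_le_height
            omega
        _ = ∑ j ∈ Finset.range (k + 1),
              ∑ M ∈ Finset.univ.filter fun M : Matrix (Fin k) (Fin m) F => M ∈ D ∧ M.rank = j,
                Nat.card {U : Submodule F (Fin k → F) // finrank F ↥U = i ∧ M ∈ matIn m U} := by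
            refine Finset.sum_congr rfl fun j _ => ?_
            rw [Finset.filter_filter]
    -- apply key to C and C'
    have hK := key C hC hC0 rfl
    have hK' := key C' hC' hC'0 hmin.symm
    -- T function
    set T : Submodule F (Matrix (Fin k) (Fin m) F) → ℕ → ℕ := fun D j =>
      ∑ M ∈ Finset.univ.filter fun M : Matrix (Fin k) (Fin m) F => M ∈ D ∧ M.rank = j,
        Nat.card {U : Submodule F (Fin k → F) // finrank F ↥U = i ∧ M ∈ matIn m U} with hT
    have htot : ∑ j ∈ Finset.range (k + 1), T C j = ∑ j ∈ Finset.range (k + 1), T C' j := by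
      rw [← hK, ← hK']
    have hTi : ∀ D : Submodule F (Matrix (Fin k) (Fin m) F), T D i = rankDist D i := by
      intro D
      rw [hT]
      simp only
      rw [Finset.sum_congr rfl fun M hM =>
        card_contain_of_rank_eq M (Finset.mem_filter.mp hM).2.2]
      rw [Finset.sum_const, smul_eq_mul, mul_one]
      rw [filter_card_eq_nat_card]
      rfl
    have hTne : ∀ j ∈ Finset.range (k + 1), j ≠ i → T C j = T C' j := by
      intro j _ hji
      rcases lt_or_gt_of_ne hji with hj | hj
      · -- j < i : use IH
        have hcard : (Finset.univ.filter fun M : Matrix (Fin k) (Fin m) F =>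
            M ∈ C ∧ M.rank = j).card =
            (Finset.univ.filter fun M : Matrix (Fin k) (Fin m) F =>
            M ∈ C' ∧ M.rank = j).card := by
          rw [filter_card_eq_nat_card, filter_card_eq_nat_card]
          exact IH j hj
        rcases Finset.eq_empty_or_nonempty
            (Finset.univ.filter fun M : Matrix (Fin k) (Fin m) F => M ∈ C ∧ M.rank = j) with
          hemp | ⟨M₀, hM₀⟩
        · have hemp' : (Finset.univ.filter fun M : Matrix (Fin k) (Fin m) F =>
              M ∈ C' ∧ M.rank = j) = ∅ := by
            rw [← Finset.card_eq_zero, ← hcard, Finset.card_eq_zero]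
            exact hemp
          rw [hT]
          simp only
          rw [hemp, hemp']
        · have hM₀r : M₀.rank = j := (Finset.mem_filter.mp hM₀).2.2
          rw [hT]
          simp only
          rw [Finset.sum_congr rfl fun M hM =>
              card_contain_eq M M₀ (((Finset.mem_filter.mp hM).2.2).trans hM₀r.symm)]
          rw [Finset.sum_congr rfl fun M hM =>
              card_contain_eq M M₀ (((Finset.mem_filter.mp hM).2.2).trans hM₀r.symm)]
          rw [Finset.sum_const, Finset.sum_const, hcard]
      · -- j > i : both sums vanish
        rw [hT]
        simp only
        rw [Finset.sum_congr rfl fun M hM =>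
            card_contain_of_lt M (by rw [(Finset.mem_filter.mp hM).2.2]; omega)]
        rw [Finset.sum_congr rfl fun M hM =>
            card_contain_of_lt M (by rw [(Finset.mem_filter.mp hM).2.2]; omega)]
        simp
    have hirange : i ∈ Finset.range (k + 1) := Finset.mem_range.mpr (by omega)
    have h1 := Finset.add_sum_erase _ (T C) hirange
    have h2 := Finset.add_sum_erase _ (T C') hirange
    have herase : ∑ j ∈ (Finset.range (k + 1)).erase i, T C j
        = ∑ j ∈ (Finset.range (k + 1)).erase i, T C' j := by
      refine Finset.sum_congr rfl fun j hj => ?_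
      exact hTne j (Finset.mem_of_mem_erase hj) (Finset.ne_of_mem_erase hj)
    rw [← hTi C, ← hTi C']
    omega

end AuxRankMetric

/-- The rank distribution of a non-zero MRD code only depends on `k`, `m` and the minimum
rank. -/
theorem stmt_9 (F : Type) [Field F] [Fintype F] (k m : ℕ) (hk : 0 < k) (hm : 0 < m)
    (C C' : Submodule F (Matrix (Fin k) (Fin m) F))
    (hC : IsMRD C) (hC' : IsMRD C') (hC0 : C ≠ ⊥) (hC'0 : C' ≠ ⊥)
    (hmin : minrk C = minrk C') :
    ∀ i : ℕ, rankDist C i = rankDist C' i := by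
  rcases le_or_gt k m with hkm | hmk
  · exact fun i => main_le hkm C C' hC hC' hC0 hC'0 hmin i
  · intro i
    have hrk : ∀ M : Matrix (Fin k) (Fin m) F,
        ((Matrix.transposeLinearEquiv (Fin k) (Fin m) F F) M).rank = M.rank := fun M =>
      Matrix.rank_transpose M
    have hMRD : ∀ D : Submodule F (Matrix (Fin k) (Fin m) F), IsMRD D → D ≠ ⊥ →
        IsMRD (D.map (Matrix.transposeLinearEquiv (Fin k) (Fin m) F F).toLinearMap) := by
      intro D hD hD0
      right
      rcases hD with h | h
      · exact absurd h hD0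
      · rw [finrank_map_equiv, minrk_map _ hrk, Nat.max_comm m k, Nat.min_comm m k]
        exact h
    have hb : C.map (Matrix.transposeLinearEquiv (Fin k) (Fin m) F F).toLinearMap ≠ ⊥ := fun h =>
      hC0 ((map_eq_bot_iff' _ C).mp h)
    have hb' : C'.map (Matrix.transposeLinearEquiv (Fin k) (Fin m) F F).toLinearMap ≠ ⊥ := fun h =>
      hC'0 ((map_eq_bot_iff' _ C').mp h)
    have hm2 : minrk (C.map (Matrix.transposeLinearEquiv (Fin k) (Fin m) F F).toLinearMap)
        = minrk (C'.map (Matrix.transposeLinearEquiv (Fin k) (Fin m) F F).toLinearMap) := by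
      rw [minrk_map _ hrk, minrk_map _ hrk, hmin]
    have hmain := main_le (le_of_lt hmk)
      (C.map (Matrix.transposeLinearEquiv (Fin k) (Fin m) F F).toLinearMap)
      (C'.map (Matrix.transposeLinearEquiv (Fin k) (Fin m) F F).toLinearMap)
      (hMRD C hC hC0) (hMRD C' hC' hC'0) hb hb' hm2 i
    rw [rankDist_map _ hrk C i, rankDist_map _ hrk C' i] at hmain
    exact hmain
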